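/- Let λ0, λ2, M be positive reals with √(λ0/λ2) ≤ M, and let β ∈ ℝ satisfy |β| ≤ M. Then the infimum of λ0·z + λ2·s over all pairs (s, z) with s ≥ 0, z ∈ [0,1], β² ≤ s·z, and |β| ≤ M·z equals 2λ0·B(β·√(λ2/λ0)), where B is the reverse Huber function. -/

import Mathlib

set_option maxHeartbeats 1000000


/-- The reverse Huber function: `B(t) = |t|` for `|t| ≤ 1` and `B(t) = (t² + 1)/2` otherwise. -/
noncomputable def revHuber (t : ℝ) : ℝ := if |t| ≤ 1 then |t| else (t ^ 2 + 1) / 2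

theorem perspective_pointwise_le
    (l0 l2 M β : ℝ) (hl0 : 0 < l0) (hl2 : 0 < l2) (hM : 0 < M)
    (hcase : Real.sqrt (l0 / l2) ≤ M) (hβ : |β| ≤ M) :
    sInf {v : ℝ | ∃ s z : ℝ, 0 ≤ s ∧ 0 ≤ z ∧ z ≤ 1 ∧ β ^ 2 ≤ s * z ∧ |β| ≤ M * z ∧
        v = l0 * z + l2 * s} =
      2 * l0 * revHuber (β * Real.sqrt (l2 / l0)) := by
  set r : ℝ := Real.sqrt (l2 / l0) with hr
  have hr0 : 0 < r := Real.sqrt_pos.mpr (div_pos hl2 hl0)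
  have hr2 : r ^ 2 = l2 / l0 := Real.sq_sqrt (le_of_lt (div_pos hl2 hl0))
  have hl0r2 : l0 * r ^ 2 = l2 := by
    rw [hr2]; field_simp; try ring
  have hMr : 1 ≤ M * r := by
    have h1 : Real.sqrt (l0 / l2) * r = 1 := by
      rw [hr, ← Real.sqrt_mul (le_of_lt (div_pos hl0 hl2))]
      rw [div_mul_div_comm]
      rw [show l0 * l2 / (l2 * l0) = 1 by rw [mul_comm l2 l0]; exact div_self (by positivity)]
      exact Real.sqrt_one
    calc 1 = Real.sqrt (l0 / l2) * r := h1.symm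
    _ ≤ M * r := by
      apply mul_le_mul_of_nonneg_right hcase (le_of_lt hr0)
  have habs : |β * r| = |β| * r := by
    rw [abs_mul, abs_of_pos hr0]
  have hmem : 2 * l0 * revHuber (β * r) ∈
      {v : ℝ | ∃ s z : ℝ, 0 ≤ s ∧ 0 ≤ z ∧ z ≤ 1 ∧ β ^ 2 ≤ s * z ∧ |β| ≤ M * z ∧
        v = l0 * z + l2 * s} := by
    by_cases ht : |β * r| ≤ 1
    · refine ⟨|β| / r, |β| * r, ?_, ?_, ?_, ?_, ?_, ?_⟩
      · positivity
      · positivity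
      · rwa [habs] at ht
      · have key : |β| / r * (|β| * r) = |β| ^ 2 := by
          field_simp
        rw [sq_abs] at key
        exact key.ge
      · calc |β| = 1 * |β| := (one_mul _).symm
        _ ≤ (M * r) * |β| := by
            apply mul_le_mul_of_nonneg_right hMr (abs_nonneg β)
        _ = M * (|β| * r) := by ring
      · rw [revHuber, if_pos ht, habs]
        have : l2 * (|β| / r) = l0 * (|β| * r) := by
          field_simp
          nlinarith [hl0r2]
        rw [this]; ring
    · refine ⟨β ^ 2, 1, sq_nonneg β, zero_le_one, le_refl 1, ?_, by simpa using hβ, ?_⟩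
      · simp
      · rw [revHuber, if_neg ht]
        have : (β * r) ^ 2 = l2 / l0 * β ^ 2 := by rw [mul_pow, hr2]; ring
        rw [this]
        field_simp
        ring
  have hlb : ∀ v ∈ {v : ℝ | ∃ s z : ℝ, 0 ≤ s ∧ 0 ≤ z ∧ z ≤ 1 ∧ β ^ 2 ≤ s * z ∧ |β| ≤ M * z ∧
        v = l0 * z + l2 * s}, 2 * l0 * revHuber (β * r) ≤ v := by
    rintro v ⟨s, z, hs, hz0, hz1, hsz, hβz, rfl⟩
    rcases eq_or_lt_of_le hz0 with hz | hz
    · -- z = 0 forces β = 0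
      have hβ0 : β = 0 := by
        have : |β| ≤ 0 := by rw [← hz] at hβz; simpa using hβz
        exact abs_eq_zero.mp (le_antisymm this (abs_nonneg β))
      subst hβ0
      rw [show (0:ℝ) * r = 0 by ring, revHuber]
      simp only [abs_zero, zero_le_one, if_pos]
      have : (0:ℝ) ≤ l0 * z + l2 * s := by positivity
      simpa using this
    · by_cases ht : |β * r| ≤ 1
      · rw [revHuber, if_pos ht, habs]
        -- need 2*l0*(|β|*r) ≤ l0*z + l2*s, using β² ≤ s*z, z > 0, l2 = l0*r²
        have h1 : l2 * β ^ 2 ≤ l2 * (s * z) := by nlinarith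
        have h2 : 0 ≤ l0 * (z - |β| * r) ^ 2 := by positivity
        have hb2 : β ^ 2 = (|β|) ^ 2 := (sq_abs β).symm
        nlinarith [mul_pos hl0 hz, abs_nonneg β, hr0.le]
      · rw [revHuber, if_neg ht]
        have hteq : (β * r) ^ 2 = l2 / l0 * β ^ 2 := by rw [mul_pow, hr2]; ring
        rw [hteq]
        push_neg at ht
        have ht1 : 1 < (β * r) ^ 2 := by
          nlinarith [abs_nonneg (β * r), sq_abs (β * r)]
        have hl0lt : l0 < l2 * β ^ 2 := by
          rw [hteq] at ht1
          have := mul_lt_mul_of_pos_left ht1 hl0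
          rw [mul_one] at this
          calc l0 < l0 * (l2 / l0 * β ^ 2) := this
          _ = l2 * β ^ 2 := by field_simp; try ring
        have h1 : l2 * β ^ 2 ≤ l2 * (s * z) := by nlinarith
        have h2 : 0 ≤ (1 - z) * (l2 * β ^ 2 - l0 * z) := by
          apply mul_nonneg (by linarith)
          nlinarith
        have hgoal : (l2 * β ^ 2 + l0) * z ≤ (l0 * z + l2 * s) * z := by nlinarith
        have : l2 * β ^ 2 + l0 ≤ l0 * z + l2 * s := le_of_mul_le_mul_right hgoal hz
        calc 2 * l0 * ((l2 / l0 * β ^ 2 + 1) / 2) = l2 * β ^ 2 + l0 := by field_simp; try ring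
        _ ≤ l0 * z + l2 * s := this
  exact le_antisymm (csInf_le ⟨_, hlb⟩ hmem) (le_csInf ⟨_, hmem⟩ hlb)
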